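/- Let A be a real symmetric positive-definite n×n matrix with nonnegative diagonal that is (weakly) diagonally dominant: A_ii ≥ Σ_{j≠i}|A_ij| for every i. Let F be a subset of the index set such that the principal submatrix A_FF is η-diagonally dominant for some η with 1/2 < η ≤ 1, i.e., A_ii ≥ η·Σ_{j∈F}|A_ij| for every i ∈ F. Define the diagonal matrix D_FF with row-wise entries (D_FF)_ii = 2·A_ii - Σ_{j∈F}|A_ij| for i ∈ F, and set E := A_FF - D_FF and ε := (2-2η)/(2η-1). Then all hypotheses of the AMGr convergence theorem are satisfied: (i) E is positive semidefinite; (ii) ε·D_FF - E is positive semidefinite; and (iii) the matrix obtained from A by replacing the F-F block with D_FF (keeping all other entries of A) is positive semidefinite. -/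

import Mathlib

open Matrix

lemma posSemidef_of_dd {m : Type*} [Fintype m] [DecidableEq m]
    (B : Matrix m m ℝ) (hsym : ∀ i j, B i j = B j i)
    (h : ∀ i, ∑ j ∈ Finset.univ.erase i, |B i j| ≤ B i i) :
    B.PosSemidef := by
  have swap : ∀ g : m → m → ℝ,
      ∑ i, ∑ j ∈ Finset.univ.erase i, g i j = ∑ i, ∑ j ∈ Finset.univ.erase i, g j i := by
    intro g
    rw [Finset.sum_comm' (s' := fun i => Finset.univ.erase i) (t' := Finset.univ)]
    intro x y
    simp [Finset.mem_erase, eq_comm, and_comm]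
  rw [Matrix.posSemidef_iff_dotProduct_mulVec]
  constructor
  · ext i j
    simp [Matrix.conjTranspose_apply, hsym i j]
  · intro x
    have hx : star x = x := by simp
    rw [hx]
    have hQ : dotProduct x (B *ᵥ x) = ∑ i, ∑ j, x i * (B i j * x j) := by
      simp [dotProduct, Matrix.mulVec, Finset.mul_sum]
    rw [hQ]
    have split : ∀ i, ∑ j, x i * (B i j * x j)
        = B i i * x i ^ 2 + ∑ j ∈ Finset.univ.erase i, x i * (B i j * x j) := by
      intro i
      rw [← Finset.add_sum_erase _ _ (Finset.mem_univ i)]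
      congr 1
      ring
    rw [Finset.sum_congr rfl fun i _ => split i, Finset.sum_add_distrib]
    set S1 := ∑ i, ∑ j ∈ Finset.univ.erase i, (1/2) * |B i j| * x i ^ 2 with hS1
    set S2 := ∑ i, ∑ j ∈ Finset.univ.erase i, (1/2) * |B i j| * x j ^ 2 with hS2
    set S3 := ∑ i, ∑ j ∈ Finset.univ.erase i, x i * (B i j * x j) with hS3
    have h1 : ∑ i, (∑ j ∈ Finset.univ.erase i, |B i j|) * x i ^ 2 ≤ ∑ i, B i i * x i ^ 2 :=
      Finset.sum_le_sum fun i _ => mul_le_mul_of_nonneg_right (h i) (sq_nonneg _)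
    have h2 : ∑ i, (∑ j ∈ Finset.univ.erase i, |B i j|) * x i ^ 2 = S1 + S1 := by
      rw [hS1, ← Finset.sum_add_distrib]
      refine Finset.sum_congr rfl fun i _ => ?_
      rw [← Finset.sum_add_distrib, Finset.sum_mul]
      refine Finset.sum_congr rfl fun j _ => by ring
    have h3 : S2 = S1 := by
      rw [hS2, swap (fun i j => (1/2) * |B i j| * x j ^ 2)]
      refine Finset.sum_congr rfl fun i _ => Finset.sum_congr rfl fun j _ => ?_
      rw [hsym j i]
    have h4 : 0 ≤ S1 + S2 + S3 := by
      rw [hS1, hS2, hS3, ← Finset.sum_add_distrib, ← Finset.sum_add_distrib]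
      refine Finset.sum_nonneg fun i _ => ?_
      rw [← Finset.sum_add_distrib, ← Finset.sum_add_distrib]
      refine Finset.sum_nonneg fun j _ => ?_
      have h5 : |x i * (B i j * x j)| = |B i j| * (|x i| * |x j|) := by
        rw [abs_mul, abs_mul]; ring
      nlinarith [neg_abs_le (x i * (B i j * x j)), sq_nonneg (|x i| - |x j|),
        abs_nonneg (B i j), sq_abs (x i), sq_abs (x j)]
    linarith

/-- A symmetric, positive-definite, weakly diagonally dominant matrix `A`
whose `F`-`F` block is `η`-diagonally dominant (with `1/2 < η ≤ 1`) satisfies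
all hypotheses of the two-grid AMGr convergence theorem with
`ε = (2-2η)/(2η-1)` and `D_FF = diagonal (2 A_ii - ∑_{j∈F} |A_ij|)`:
(i) `E = A_FF - D_FF ⪰ 0`; (ii) `ε • D_FF - E ⪰ 0`; (iii) the matrix obtained
from `A` by replacing the `F`-`F` block with `D_FF` is positive semidefinite. -/
theorem amgr_hypotheses_satisfied
    {n : Type*} [Fintype n] [DecidableEq n]
    (A : Matrix n n ℝ) (hsym : Aᵀ = A) (hposdef : A.PosDef)
    (hdiag : ∀ i, 0 ≤ A i i)
    (hdd : ∀ i, ∑ j ∈ Finset.univ.erase i, |A i j| ≤ A i i)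
    (F : Finset n)
    (η : ℝ) (hη₁ : 1 / 2 < η) (hη₂ : η ≤ 1)
    (hηdd : ∀ i ∈ F, η * ∑ j ∈ F, |A i j| ≤ A i i)
    (A_FF D_FF : Matrix ↥F ↥F ℝ)
    (hAFF : A_FF = A.submatrix (Subtype.val) (Subtype.val))
    (hDFF : D_FF = Matrix.diagonal (fun i : ↥F => 2 * A i i - ∑ k ∈ F, |A i k|))
    (ε : ℝ) (hεdef : ε = (2 - 2 * η) / (2 * η - 1))
    (M : Matrix n n ℝ)
    (hM : M = fun i j =>
      if i ∈ F ∧ j ∈ F then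
        (if i = j then 2 * A i i - ∑ k ∈ F, |A i k| else 0)
      else A i j) :
    (A_FF - D_FF).PosSemidef
      ∧ (ε • D_FF - (A_FF - D_FF)).PosSemidef
      ∧ M.PosSemidef := by
  have hs : ∀ i j, A i j = A j i := by
    intro i j
    have := congrFun (congrFun hsym i) j
    simpa using this.symm
  have h2η : (0:ℝ) < 2 * η - 1 := by linarith
  have hε0 : 0 ≤ ε := by
    rw [hεdef]; apply div_nonneg <;> linarith
  have hεmul : ε * (2 * η - 1) = 2 - 2 * η := by
    rw [hεdef]; field_simp
  -- sums over the subtype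
  have hsub : ∀ i : ↥F, (∑ j : ↥F, |A i.1 j.1|) = ∑ k ∈ F, |A i.1 k| :=
    fun i => Finset.sum_coe_sort F (fun k => |A i.1 k|)
  have herase : ∀ i : ↥F, ∑ j ∈ Finset.univ.erase i, |A i.1 j.1|
      = (∑ k ∈ F, |A i.1 k|) - A i.1 i.1 := by
    intro i
    have h1 := Finset.add_sum_erase Finset.univ (fun j : ↥F => |A i.1 j.1|) (Finset.mem_univ i)
    rw [hsub i, abs_of_nonneg (hdiag i.1)] at h1
    linarith
  refine ⟨?_, ?_, ?_⟩
  · -- (i) E = A_FF - D_FF is PSD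
    apply posSemidef_of_dd
    · intro i j
      by_cases hij : i = j
      · subst hij; rfl
      · have hij' : i.1 ≠ j.1 := fun h => hij (Subtype.ext h)
        simp [hAFF, hDFF, Matrix.sub_apply, Matrix.diagonal_apply_ne _ hij,
          Matrix.diagonal_apply_ne _ (Ne.symm hij), hs i.1 j.1]
    · intro i
      have e1 : ∀ j ∈ Finset.univ.erase i, |(A_FF - D_FF) i j| = |A i.1 j.1| := by
        intro j hj
        have hji : j ≠ i := (Finset.mem_erase.mp hj).1
        simp [hAFF, hDFF, Matrix.sub_apply, Matrix.diagonal_apply_ne _ (Ne.symm hji)]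
      rw [Finset.sum_congr rfl e1, herase i]
      have : (A_FF - D_FF) i i = (∑ k ∈ F, |A i.1 k|) - A i.1 i.1 := by
        simp [hAFF, hDFF, Matrix.sub_apply]
        ring
      rw [this]
  · -- (ii) ε • D_FF - E is PSD
    apply posSemidef_of_dd
    · intro i j
      by_cases hij : i = j
      · subst hij; rfl
      · simp [hAFF, hDFF, Matrix.sub_apply, Matrix.smul_apply,
          Matrix.diagonal_apply_ne _ hij, Matrix.diagonal_apply_ne _ (Ne.symm hij),
          hs i.1 j.1]
    · intro i
      have e1 : ∀ j ∈ Finset.univ.erase i, |(ε • D_FF - (A_FF - D_FF)) i j| = |A i.1 j.1| := by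
        intro j hj
        have hji : j ≠ i := (Finset.mem_erase.mp hj).1
        simp [hAFF, hDFF, Matrix.sub_apply, Matrix.smul_apply,
          Matrix.diagonal_apply_ne _ (Ne.symm hji)]
      rw [Finset.sum_congr rfl e1, herase i]
      have e2 : (ε • D_FF - (A_FF - D_FF)) i i
          = ε * (2 * A i.1 i.1 - ∑ k ∈ F, |A i.1 k|)
            - (A i.1 i.1 - (2 * A i.1 i.1 - ∑ k ∈ F, |A i.1 k|)) := by
        simp [hAFF, hDFF, Matrix.sub_apply, Matrix.smul_apply]
      rw [e2]
      set s := ∑ k ∈ F, |A i.1 k| with hsdef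
      have hη := hηdd i.1 i.2
      have hs0 : 0 ≤ s := Finset.sum_nonneg fun k _ => abs_nonneg _
      have k1 : (2 * η - 1) * s ≤ 2 * A i.1 i.1 - s := by nlinarith
      have k2 : ε * ((2 * η - 1) * s) ≤ ε * (2 * A i.1 i.1 - s) :=
        mul_le_mul_of_nonneg_left k1 hε0
      have k3 : ε * ((2 * η - 1) * s) = (2 - 2 * η) * s := by
        rw [← mul_assoc, hεmul]
      have k4 : (2 - 2 * η) * s = 2 * s - 2 * (η * s) := by ring
      linarith
  · -- (iii) modified matrix is PSD
    apply posSemidef_of_dd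
    · intro i j
      by_cases hij : i = j
      · subst hij; rfl
      · simp only [hM]
        by_cases hiF : i ∈ F <;> by_cases hjF : j ∈ F <;>
          simp [hiF, hjF, hij, Ne.symm hij, hs i j]
    · intro i
      by_cases hiF : i ∈ F
      · have e1 : ∀ j ∈ Finset.univ.erase i, |M i j| = (if j ∈ F then 0 else |A i j|) := by
          intro j hj
          have hji : j ≠ i := (Finset.mem_erase.mp hj).1
          by_cases hjF : j ∈ F <;> simp [hM, hiF, hjF, (Ne.symm hji : i ≠ j)]
        rw [Finset.sum_congr rfl e1, Finset.sum_ite, Finset.sum_const_zero, zero_add]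
        have hfe : (Finset.univ.erase i).filter (fun j => j ∈ F) = F.erase i := by
          ext j; simp [Finset.mem_erase, Finset.mem_filter, and_comm]
        have hsplit := Finset.sum_filter_add_sum_filter_not (Finset.univ.erase i)
          (fun j => j ∈ F) (fun j => |A i j|)
        rw [hfe] at hsplit
        have hFsum : |A i i| + ∑ k ∈ F.erase i, |A i k| = ∑ k ∈ F, |A i k| :=
          Finset.add_sum_erase F (fun k => |A i k|) hiF
        rw [abs_of_nonneg (hdiag i)] at hFsum
        have hMii : M i i = 2 * A i i - ∑ k ∈ F, |A i k| := by simp [hM, hiF]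
        rw [hMii]
        have := hdd i
        linarith
      · have e1 : ∀ j ∈ Finset.univ.erase i, |M i j| = |A i j| := by
          intro j hj
          simp [hM, hiF]
        have hMii : M i i = A i i := by simp [hM, hiF]
        rw [Finset.sum_congr rfl e1, hMii]
        exact hdd i
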